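/- Let optcost(n) be the minimum total sum of completion times for scheduling n unit jobs in the list 1-batch problem (setup time 1 per batch). Then optcost(n) = F(n) for all n ≥ 0, where F(m(m+1)/2 + k) = m(m+1)(m+2)(3m+5)/24 + k(n+m-k+1) + k(k+1)/2 for n = m(m+1)/2 + k, 0 ≤ k ≤ m+1. -/

import Mathlib

/-- Cost of a list of batch sizes, where `i` batches have already been scheduled
and `t` jobs already processed: batch `b` completes at time `i + 1 + t + b`. -/
def batchCostAux : ℕ → ℕ → List ℕ → ℕ
  | _, _, [] => 0
  | i, t, b :: rest => b * (i + 1 + t + b) + batchCostAux (i + 1) (t + b) rest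

/-- Total cost of a composition `l = (b_1, ..., b_r)`:  `Σ_i b_i (i + Σ_{j ≤ i} b_j)`. -/
def batchCost (l : List ℕ) : ℕ := batchCostAux 0 0 l

/-- Minimum sum of completion times for `n` unit jobs in the list 1-batch problem. -/
noncomputable def optcost (n : ℕ) : ℕ :=
  sInf {c | ∃ l : List ℕ, (∀ b ∈ l, 0 < b) ∧ l.sum = n ∧ batchCost l = c}

/-- The closed form value for `n = m (m+1)/2 + k`:
`F(n) = m(m+1)(m+2)(3m+5)/24 + k (n + m - k + 1) + k(k+1)/2`. -/
def Fval (m k : ℕ) : ℕ :=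
  m * (m + 1) * (m + 2) * (3 * m + 5) / 24
    + k * (m * (m + 1) / 2 + k + m - k + 1) + k * (k + 1) / 2

/-- The unique `m` with `m(m+1)/2 ≤ n < (m+1)(m+2)/2`. -/
def triIdx (n : ℕ) : ℕ := (Nat.sqrt (8 * n + 1) - 1) / 2

/-- `F n`, computed via the triangular decomposition of `n`. -/
def F (n : ℕ) : ℕ := Fval (triIdx n) (n - triIdx n * (triIdx n + 1) / 2)

lemma P24dvd (m : ℕ) : 24 ∣ m * (m + 1) * (m + 2) * (3 * m + 5) := by
  induction m with
  | zero => norm_num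
  | succ m ih =>
    obtain ⟨p, hp⟩ := ih
    obtain ⟨t, ht⟩ : 2 ∣ (m + 1) * (m + 2) := (Nat.even_mul_succ_self (m+1)).two_dvd
    refine ⟨p + t * (m + 2), ?_⟩
    have h1 : (m+1) * ((m+1) + 1) * ((m+1) + 2) * (3 * (m+1) + 5)
        = m * (m + 1) * (m + 2) * (3 * m + 5) + 12 * ((m + 1) * (m + 2)) * (m + 2) := by ring
    rw [h1, hp, ht]; ring
lemma Fval24 (m k : ℕ) : 24 * Fval m k
    = m * (m + 1) * (m + 2) * (3 * m + 5) + 12 * k * (m * (m + 1)) + 24 * k * (m + 1)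
      + 12 * (k * (k + 1)) := by
  obtain ⟨p, hp⟩ := P24dvd m
  obtain ⟨t, ht⟩ : 2 ∣ m * (m + 1) := (Nat.even_mul_succ_self m).two_dvd
  obtain ⟨q, hq⟩ : 2 ∣ k * (k + 1) := (Nat.even_mul_succ_self k).two_dvd
  unfold Fval
  rw [hp, ht, hq]
  simp only [Nat.mul_div_cancel_left _ (by norm_num : 0 < 24),
    Nat.mul_div_cancel_left _ (by norm_num : 0 < 2)]
  have h2 : t + k + m - k + 1 = t + m + 1 := by omega
  rw [h2]; ring
lemma mul24_cancel {a b : ℕ} (h : 24 * a = 24 * b) : a = b := by omega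
lemma FvalA (m k n : ℕ) (hn : 2 * n = m * (m + 1) + 2 * (k + 1)) :
    Fval m (k + 1) = Fval m k + (n + m + 1) := by
  apply mul24_cancel
  have hz : (2 * n : ℤ) = m * (m + 1) + 2 * (k + 1) := by exact_mod_cast hn
  have : (24 : ℕ) * (Fval m k + (n + m + 1)) = 24 * Fval m k + 24 * (n + m + 1) := by ring
  rw [this, Fval24, Fval24]
  zify
  push_cast
  linear_combination -12 * hz
lemma FvalB (m n : ℕ) (hn : 2 * n = (m + 1) * (m + 2)) :
    Fval (m + 1) 0 = Fval m m + (n + m + 1) := by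
  apply mul24_cancel
  have hz : (2 * n : ℤ) = (m + 1) * (m + 2) := by exact_mod_cast hn
  have : (24 : ℕ) * (Fval m m + (n + m + 1)) = 24 * Fval m m + 24 * (n + m + 1) := by ring
  rw [this, Fval24, Fval24]
  zify
  push_cast
  linear_combination -12 * hz
lemma FvalBridge (m : ℕ) : Fval m (m + 1) = Fval (m + 1) 0 := by
  apply mul24_cancel
  rw [Fval24, Fval24]
  ring
lemma FvalU1 (m k n : ℕ) (hn : 2 * n = (m + 1) * (m + 2) + 2 * k) :
    Fval (m + 1) k = (1 + (m + 1)) * n + Fval m k := by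
  apply mul24_cancel
  have hz : (2 * n : ℤ) = (m + 1) * (m + 2) + 2 * k := by exact_mod_cast hn
  have : (24 : ℕ) * ((1 + (m + 1)) * n + Fval m k)
      = 24 * (1 + (m + 1)) * n + 24 * Fval m k := by ring
  rw [this, Fval24, Fval24]
  zify
  push_cast
  linear_combination (-12 * ((m : ℤ) + 2)) * hz
lemma FvalU2 (m n : ℕ) (hn : 2 * n = m * (m + 1) + 2 * m) :
    Fval m m = (1 + m) * n + Fval m 0 := by
  apply mul24_cancel
  have hz : (2 * n : ℤ) = m * (m + 1) + 2 * m := by exact_mod_cast hn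
  have : (24 : ℕ) * ((1 + m) * n + Fval m 0) = 24 * (1 + m) * n + 24 * Fval m 0 := by ring
  rw [this, Fval24, Fval24]
  zify
  push_cast
  linear_combination (-12 * ((m : ℤ) + 1)) * hz
lemma FvalK1 (m c b n : ℕ) (hk : c + b ≤ m) (hn : 2 * n = m * (m + 1) + 2 * (c + b)) :
    Fval m (c + b) ≤ (1 + b) * n + Fval m c := by
  have h24 : 24 * Fval m (c + b) ≤ 24 * ((1 + b) * n + Fval m c) := by
    have : (24 : ℕ) * ((1 + b) * n + Fval m c) = 24 * (1 + b) * n + 24 * Fval m c := by ring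
    rw [this, Fval24, Fval24]
    zify
    have hz : (2 * n : ℤ) = m * (m + 1) + 2 * (c + b) := by exact_mod_cast hn
    have hb : (b : ℤ) ≤ m := by exact_mod_cast le_trans (Nat.le_add_left b c) hk
    have hid : 24 * (1 + (b:ℤ)) * n + ((m:ℤ) * (m + 1) * (m + 2) * (3 * m + 5)
          + 12 * c * (m * (m + 1)) + 24 * c * (m + 1) + 12 * (c * (c + 1)))
        = ((m:ℤ) * (m + 1) * (m + 2) * (3 * m + 5) + 12 * (c + b) * (m * (m + 1))
          + 24 * (c + b) * (m + 1) + 12 * ((c + b) * (c + b + 1)))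
          + 12 * (((m:ℤ) - b) ^ 2 + ((m:ℤ) - b) + 2 * c) := by
      linear_combination (12 * (1 + (b:ℤ))) * hz
    push_cast
    nlinarith [sq_nonneg ((m:ℤ) - b), hb, Int.natCast_nonneg c]
  omega
lemma FvalK2 (M k c b n : ℕ) (hb1 : k < b) (hb2 : b ≤ M + 1)
    (hc : c + b = M + 1 + k) (hn : 2 * n = (M + 1) * (M + 2) + 2 * k) :
    Fval (M + 1) k ≤ (1 + b) * n + Fval M c := by
  have h24 : 24 * Fval (M + 1) k ≤ 24 * ((1 + b) * n + Fval M c) := by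
    have : (24 : ℕ) * ((1 + b) * n + Fval M c) = 24 * (1 + b) * n + 24 * Fval M c := by ring
    rw [this, Fval24, Fval24]
    zify
    have hz : (2 * n : ℤ) = (M + 1) * (M + 2) + 2 * k := by exact_mod_cast hn
    have hcz : (c : ℤ) = M + 1 + k - b := by
      have : ((c : ℤ) + b) = M + 1 + k := by exact_mod_cast hc
      linarith
    have hbz : (b : ℤ) ≤ M + 1 := by exact_mod_cast hb2
    rw [hcz]
    have hid : 24 * (1 + (b:ℤ)) * n + ((M:ℤ) * (M + 1) * (M + 2) * (3 * M + 5)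
          + 12 * ((M:ℤ) + 1 + k - b) * (M * (M + 1)) + 24 * ((M:ℤ) + 1 + k - b) * (M + 1)
          + 12 * (((M:ℤ) + 1 + k - b) * (((M:ℤ) + 1 + k - b) + 1)))
        = (((M:ℤ)+1) * ((M:ℤ) + 2) * ((M:ℤ) + 3) * (3 * ((M:ℤ)+1) + 5)
          + 12 * (k:ℤ) * (((M:ℤ)+1) * ((M:ℤ) + 2)) + 24 * (k:ℤ) * (((M:ℤ)+1) + 1)
          + 12 * ((k:ℤ) * ((k:ℤ) + 1)))
          + 12 * (((M:ℤ) + 1 - b) * ((M:ℤ) + 2 - b)) := by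
      linear_combination (12 * (1 + (b:ℤ))) * hz
    push_cast
    nlinarith [mul_nonneg (by linarith : (0:ℤ) ≤ (M:ℤ) + 1 - b) (by linarith : (0:ℤ) ≤ (M:ℤ) + 2 - b)]
  omega
lemma batchCostAux_shift (l : List ℕ) : ∀ i t : ℕ,
    batchCostAux i t l = batchCostAux 0 0 l + (i + t) * l.sum := by
  induction l with
  | nil => intro i t; simp [batchCostAux]
  | cons b rest ih =>
    intro i t
    simp only [batchCostAux, List.sum_cons]
    rw [ih (i + 1) (t + b), ih (0 + 1) (0 + b)]
    ring
lemma batchCost_cons (b : ℕ) (l : List ℕ) :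
    batchCost (b :: l) = (1 + b) * (b + l.sum) + batchCost l := by
  simp only [batchCost, batchCostAux]
  rw [batchCostAux_shift l (0 + 1) (0 + b)]
  ring
lemma decomp (j : ℕ) : ∃ m k : ℕ, k ≤ m ∧ 2 * j = m * (m + 1) + 2 * k := by
  induction j with
  | zero => exact ⟨0, 0, le_refl 0, by norm_num⟩
  | succ j ih =>
    obtain ⟨m, k, hk, hj⟩ := ih
    rcases lt_or_ge k m with h | h
    · exact ⟨m, k + 1, h, by linarith⟩
    · have hkm : k = m := le_antisymm hk h
      refine ⟨m + 1, 0, Nat.zero_le _, ?_⟩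
      have hr : (m + 1) * (m + 1 + 1) = m * (m + 1) + 2 * (m + 1) := by ring
      rw [hr]; subst hkm; linarith
lemma uniq {a x c y : ℕ} (hx : x ≤ a) (hy : y ≤ c)
    (h : a * (a + 1) + 2 * x = c * (c + 1) + 2 * y) : a = c ∧ x = y := by
  have hac : a = c := by
    by_contra hne
    rcases Nat.lt_or_ge a c with hlt | hge
    · have h1 : (a + 1) * (a + 2) ≤ c * (c + 1) := Nat.mul_le_mul hlt (by omega)
      have h2 : (a + 1) * (a + 2) = a * (a + 1) + 2 * (a + 1) := by ring
      linarith
    · have hlt : c < a := lt_of_le_of_ne hge (fun hh => hne hh.symm)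
      have h1 : (c + 1) * (c + 2) ≤ a * (a + 1) := Nat.mul_le_mul hlt (by omega)
      have h2 : (c + 1) * (c + 2) = c * (c + 1) + 2 * (c + 1) := by ring
      linarith
  subst hac
  exact ⟨rfl, by linarith⟩
lemma key : ∀ n : ℕ, ∀ m k m' k' b : ℕ, k ≤ m → k' ≤ m' →
    2 * n = m * (m + 1) + 2 * k → 1 ≤ b → b ≤ n →
    2 * (n - b) = m' * (m' + 1) + 2 * k' →
    Fval m k ≤ (1 + b) * n + Fval m' k' := by
  intro n
  induction n using Nat.strong_induction_on with
  | _ n ih =>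
    intro m k m' k' b hk hk' hn hb1 hb2 hnb
    -- m ≥ 1
    have hm : 1 ≤ m := by
      rcases Nat.eq_zero_or_pos m with h | h
      · subst h
        have hk0 : k = 0 := Nat.le_zero.mp hk
        subst hk0
        simp at hn
        omega
      · exact h
    obtain ⟨c0, hc0⟩ : ∃ c0, n = c0 + b := ⟨n - b, by omega⟩
    have hnbeq : n - b = c0 := by omega
    rw [hnbeq] at hnb
    rcases le_or_gt b m with hbm | hbm
    · rcases le_or_gt b k with hbk | hbk
      · -- same row
        obtain ⟨c, hc⟩ : ∃ c, k = c + b := ⟨k - b, by omega⟩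
        have h2 : m * (m + 1) + 2 * c = m' * (m' + 1) + 2 * k' := by
          rw [hc] at hn; linarith
        obtain ⟨hm', hk2⟩ := uniq (by omega : c ≤ m) hk' h2
        subst hm'; subst hk2
        rw [hc]
        exact FvalK1 m c b n (by omega) (by rw [hc] at hn; exact hn)
      · -- previous row
        obtain ⟨M, hM⟩ : ∃ M, m = M + 1 := ⟨m - 1, by omega⟩
        subst hM
        have h2 : M * (M + 1) + 2 * (M + 1 + k - b) = m' * (m' + 1) + 2 * k' := by
          have hr : (M + 1) * (M + 1 + 1) = M * (M + 1) + 2 * (M + 1) := by ring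
          rw [hr] at hn
          omega
        obtain ⟨hm', hk2⟩ := uniq (by omega : M + 1 + k - b ≤ M) hk' h2
        subst hm'; subst hk2
        exact FvalK2 M k (M + 1 + k - b) b n hbk hbm (by omega) hn
    · -- large b : b ≥ m + 1, reduce to (n-1, b-1)
      have hb2' : 2 ≤ b := by omega
      have hn1 : 1 ≤ n := le_trans hb1 hb2
      have hnb' : 2 * ((n - 1) - (b - 1)) = m' * (m' + 1) + 2 * k' := by
        have : (n - 1) - (b - 1) = c0 := by omega
        rw [this]; exact hnb
      rcases Nat.eq_zero_or_pos k with hk0 | hk0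
      · -- k = 0, decomposition of n-1 is (m-1, m-1)
        subst hk0
        obtain ⟨M, hM⟩ : ∃ M, m = M + 1 := ⟨m - 1, by omega⟩
        subst hM
        have hrw : 2 * n = (M + 1) * (M + 2) := by
          have hr : (M + 1) * (M + 1 + 1) = (M + 1) * (M + 2) := by ring
          rw [hr] at hn; linarith
        have h3 : 2 * (n - 1) = M * (M + 1) + 2 * M := by
          have hr : (M + 1) * (M + 2) = M * (M + 1) + 2 * M + 2 := by ring
          rw [hr] at hrw; omega
        have step := ih (n - 1) (by omega) M M m' k' (b - 1) (le_refl M) hk' h3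
          (by omega) (by omega) hnb'
        have hF := FvalB M n hrw
        have hmul : (1 + (b - 1)) * (n - 1) + (n + b) ≤ (1 + b) * n := by
          obtain ⟨n3, hn3⟩ : ∃ n3, n = n3 + 1 := ⟨n - 1, by omega⟩
          obtain ⟨b3, hb3⟩ : ∃ b3, b = b3 + 1 := ⟨b - 1, by omega⟩
          subst hn3; subst hb3
          simp only [Nat.add_sub_cancel]
          nlinarith
        calc Fval (M + 1) 0 = Fval M M + (n + M + 1) := hF
          _ ≤ (1 + (b - 1)) * (n - 1) + Fval m' k' + (n + M + 1) := by linarith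
          _ ≤ (1 + (b - 1)) * (n - 1) + Fval m' k' + (n + b) := by omega
          _ ≤ (1 + b) * n + Fval m' k' := by
              have := hmul; omega
      · -- k ≥ 1, decomposition of n-1 is (m, k-1)
        obtain ⟨K, hK⟩ : ∃ K, k = K + 1 := ⟨k - 1, by omega⟩
        subst hK
        have h3 : 2 * (n - 1) = m * (m + 1) + 2 * K := by omega
        have step := ih (n - 1) (by omega) m K m' k' (b - 1) (by omega) hk' h3
          (by omega) (by omega) hnb'
        have hF := FvalA m K n hn
        have hmul : (1 + (b - 1)) * (n - 1) + (n + b) ≤ (1 + b) * n := by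
          obtain ⟨n3, hn3⟩ : ∃ n3, n = n3 + 1 := ⟨n - 1, by omega⟩
          obtain ⟨b3, hb3⟩ : ∃ b3, b = b3 + 1 := ⟨b - 1, by omega⟩
          subst hn3; subst hb3
          simp only [Nat.add_sub_cancel]
          nlinarith
        calc Fval m (K + 1) = Fval m K + (n + m + 1) := hF
          _ ≤ (1 + (b - 1)) * (n - 1) + Fval m' k' + (n + m + 1) := by linarith
          _ ≤ (1 + (b - 1)) * (n - 1) + Fval m' k' + (n + b) := by omega
          _ ≤ (1 + b) * n + Fval m' k' := by
              have := hmul; omega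
lemma optSet_nonempty (n : ℕ) :
    {c | ∃ l : List ℕ, (∀ b ∈ l, 0 < b) ∧ l.sum = n ∧ batchCost l = c}.Nonempty :=
  ⟨batchCost (List.replicate n 1), List.replicate n 1,
    fun b hb => by
      have := List.eq_of_mem_replicate hb
      omega,
    by simp [List.sum_replicate], rfl⟩
lemma optcost_le {n : ℕ} {l : List ℕ} (hpos : ∀ b ∈ l, 0 < b) (hsum : l.sum = n) :
    optcost n ≤ batchCost l :=
  Nat.sInf_le ⟨l, hpos, hsum, rfl⟩
lemma optcost_mem (n : ℕ) :
    ∃ l : List ℕ, (∀ b ∈ l, 0 < b) ∧ l.sum = n ∧ batchCost l = optcost n :=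
  Nat.sInf_mem (optSet_nonempty n)
lemma main' : ∀ n m k : ℕ, k ≤ m → 2 * n = m * (m + 1) + 2 * k → optcost n = Fval m k := by
  intro n
  induction n using Nat.strong_induction_on with
  | _ n ih =>
    intro m k hk hn
    rcases Nat.eq_zero_or_pos n with hn0 | hn1
    · subst hn0
      have hm0 : m = 0 := by
        rcases Nat.eq_zero_or_pos m with h | h
        · exact h
        · exfalso
          have : 1 * 2 ≤ m * (m + 1) := Nat.mul_le_mul h (by omega)
          omega
      subst hm0
      have hk0 : k = 0 := Nat.le_zero.mp hk
      subst hk0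
      have h1 : optcost 0 = 0 := by
        apply Nat.le_antisymm _ (Nat.zero_le _)
        exact optcost_le (l := []) (by simp) (by simp)
      rw [h1]
      rfl
    · have hm : 1 ≤ m := by
        rcases Nat.eq_zero_or_pos m with h | h
        · exfalso; subst h
          have hk0 : k = 0 := Nat.le_zero.mp hk
          subst hk0; simp at hn; omega
        · exact h
      obtain ⟨M, hM⟩ : ∃ M, m = M + 1 := ⟨m - 1, by omega⟩
      subst hM
      have hmn : M + 1 ≤ n := by
        have h1 : (M + 1) * (M + 1 + 1) = (M + 1) * 2 + M * (M + 1) := by ring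
        rw [h1] at hn
        omega
      -- upper bound
      have hupper : optcost n ≤ Fval (M + 1) k := by
        rcases lt_or_ge k (M + 1) with hkM | hkM
        · -- k ≤ M : n - (M+1) decomposes as (M, k)
          have hL : 2 * (n - (M + 1)) = M * (M + 1) + 2 * k := by
            have h1 : (M + 1) * (M + 1 + 1) = M * (M + 1) + 2 * (M + 1) := by ring
            rw [h1] at hn
            omega
          have hocL := ih (n - (M + 1)) (by omega) M k (by omega) hL
          obtain ⟨l, hpos, hsum, hcost⟩ := optcost_mem (n - (M + 1))
          have hcons := batchCost_cons (M + 1) l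
          rw [hsum] at hcons
          have hble : optcost n ≤ batchCost ((M + 1) :: l) := by
            apply optcost_le
            · intro b hb
              rcases List.mem_cons.mp hb with h | h
              · omega
              · exact hpos b h
            · simp [hsum]; omega
          have hU : Fval (M + 1) k = (1 + (M + 1)) * n + Fval M k := by
            apply FvalU1
            have h1 : (M + 1) * (M + 1 + 1) = (M + 1) * (M + 2) := by ring
            rw [h1] at hn
            exact hn
          rw [hU]
          calc optcost n ≤ batchCost ((M + 1) :: l) := hble
            _ = (1 + (M + 1)) * (M + 1 + (n - (M + 1))) + batchCost l := hcons
            _ = (1 + (M + 1)) * n + optcost (n - (M + 1)) := by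
                rw [hcost]
                congr 1
                congr 1
                omega
            _ = (1 + (M + 1)) * n + Fval M k := by rw [hocL]
        · -- k = M + 1 : n - (M+1) decomposes as (M+1, 0)
          have hkM1 : k = M + 1 := le_antisymm hk hkM
          subst hkM1
          have hL : 2 * (n - (M + 1)) = (M + 1) * (M + 1 + 1) + 2 * 0 := by omega
          have hocL := ih (n - (M + 1)) (by omega) (M + 1) 0 (by omega) hL
          obtain ⟨l, hpos, hsum, hcost⟩ := optcost_mem (n - (M + 1))
          have hcons := batchCost_cons (M + 1) l
          rw [hsum] at hcons
          have hble : optcost n ≤ batchCost ((M + 1) :: l) := by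
            apply optcost_le
            · intro b hb
              rcases List.mem_cons.mp hb with h | h
              · omega
              · exact hpos b h
            · simp [hsum]; omega
          have hU : Fval (M + 1) (M + 1) = (1 + (M + 1)) * n + Fval (M + 1) 0 := by
            apply FvalU2
            have h1 : (M + 1) * (M + 1 + 1) + 2 * (M + 1) = (M + 1) * (M + 1 + 1) + 2 * (M + 1) := rfl
            omega
          rw [hU]
          calc optcost n ≤ batchCost ((M + 1) :: l) := hble
            _ = (1 + (M + 1)) * (M + 1 + (n - (M + 1))) + batchCost l := hcons
            _ = (1 + (M + 1)) * n + optcost (n - (M + 1)) := by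
                rw [hcost]
                congr 1
                congr 1
                omega
            _ = (1 + (M + 1)) * n + Fval (M + 1) 0 := by rw [hocL]
      -- lower bound
      have hlower : Fval (M + 1) k ≤ optcost n := by
        obtain ⟨l, hpos, hsum, hcost⟩ := optcost_mem n
        cases l with
        | nil => simp at hsum; omega
        | cons b rest =>
          have hb1 : 1 ≤ b := hpos b List.mem_cons_self
          have hsum' : b + rest.sum = n := by simpa using hsum
          have hbn : b ≤ n := by omega
          obtain ⟨m2, k2, hk2, hd⟩ := decomp (n - b)
          have hrest : rest.sum = n - b := by omega
          have hrest_cost : optcost (n - b) ≤ batchCost rest :=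
            optcost_le (fun x hx => hpos x (List.mem_cons_of_mem _ hx)) hrest
          have hoc2 := ih (n - b) (by omega) m2 k2 hk2 hd
          have hkey := key n (M + 1) k m2 k2 b hk hk2 hn hb1 hbn hd
          have hcons := batchCost_cons b rest
          rw [hrest] at hcons
          have hceq : batchCost (b :: rest) = (1 + b) * n + batchCost rest := by
            rw [hcons]
            congr 2
            omega
          calc Fval (M + 1) k ≤ (1 + b) * n + Fval m2 k2 := hkey
            _ = (1 + b) * n + optcost (n - b) := by rw [hoc2]
            _ ≤ (1 + b) * n + batchCost rest := by omega
            _ = batchCost (b :: rest) := hceq.symm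
            _ = optcost n := hcost
      omega

/-- `optcost n = F n`: for `n = m(m+1)/2 + k` with `0 ≤ k ≤ m+1`, the optimal
offline cost equals the closed form. -/
theorem optcost_eq_F (n m k : ℕ) (hk : k ≤ m + 1) (hn : n = m * (m + 1) / 2 + k) :
    optcost n = Fval m k := by
  obtain ⟨t, ht⟩ : 2 ∣ m * (m + 1) := (Nat.even_mul_succ_self m).two_dvd
  have ht2 : m * (m + 1) / 2 = t := by omega
  rw [ht2] at hn
  rcases lt_or_ge k (m + 1) with hkm | hkm
  · exact main' n m k (by omega) (by omega)
  · have hk1 : k = m + 1 := le_antisymm hk hkm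
    subst hk1
    rw [FvalBridge m]
    apply main' n (m + 1) 0 (Nat.zero_le _)
    have hr : (m + 1) * (m + 1 + 1) = m * (m + 1) + 2 * (m + 1) := by ring
    omega
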